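/- Vanishing of the effective second-order error term: Let q: ℝ^d → ℝ be positive and four times continuously differentiable, let f = log q, and let g: ℝ^d → ℝ be continuously differentiable and satisfy the second-order denoising equation q∇g = ∇²f ∇q + (Δq)∇f − ∇Δq on ℝ^d. Then for every y ∈ ℝ^d the following identity holds: Δ²q − ( ⟨∇q, ∇g⟩ + ⟨∇²q, ∇f ⊗ ∇f⟩ ) − 2⟨∇q, ∇f⟩Δf − q·( Δg + (Δf)² − ⟨∇²f, ∇²f⟩ ) − 2·( Δ²q − ⟨∇Δq, ∇f⟩ − Δq·Δf ) = 0, where all quantities are evaluated at y. -/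

import Mathlib

open MeasureTheory Real

noncomputable section

/-- Partial derivative of `h` in coordinate `i`. -/
def pd {d : ℕ} (i : Fin d) (h : (Fin d → ℝ) → ℝ) (y : Fin d → ℝ) : ℝ :=
  fderiv ℝ h y (Pi.single i 1)

/-- Iterated partial derivative along a list of coordinate indices. -/
def pdl {d : ℕ} (l : List (Fin d)) (h : (Fin d → ℝ) → ℝ) : (Fin d → ℝ) → ℝ :=
  l.foldr (fun i acc => pd i acc) h

/-- Gradient vector. -/
def grad {d : ℕ} (h : (Fin d → ℝ) → ℝ) (y : Fin d → ℝ) : Fin d → ℝ :=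
  fun i => pd i h y

/-- Hessian matrix. -/
def hess {d : ℕ} (h : (Fin d → ℝ) → ℝ) (y : Fin d → ℝ) : Matrix (Fin d) (Fin d) ℝ :=
  Matrix.of fun i j => pd i (pd j h) y

/-- Laplacian. -/
def lap {d : ℕ} (h : (Fin d → ℝ) → ℝ) (y : Fin d → ℝ) : ℝ :=
  ∑ i, pd i (pd i h) y

/-- Euclidean norm on `Fin d → ℝ`. -/
def eunorm {d : ℕ} (v : Fin d → ℝ) : ℝ :=
  Real.sqrt (∑ i, v i ^ 2)

/-- Frobenius norm of a matrix. -/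
def fnorm {d : ℕ} (A : Matrix (Fin d) (Fin d) ℝ) : ℝ :=
  Real.sqrt (∑ i, ∑ j, A i j ^ 2)

/-- Sup (ℓ∞) norm on `Fin d → ℝ`. -/
def supnorm {d : ℕ} (v : Fin d → ℝ) : ℝ :=
  ⨆ i, |v i|

/-- Smoothness assumption `S(k)`: `p` is `C^k` and all of its iterated partial
derivatives of order at most `k` are uniformly bounded. -/
def SmoothS {d : ℕ} (k : ℕ) (p : (Fin d → ℝ) → ℝ) : Prop :=
  ContDiff ℝ k p ∧
    ∀ l : List (Fin d), l.length ≤ k → ∃ M : ℝ, ∀ x, |pdl l p x| ≤ M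

/-- The class `M²(ℝ^d)` of 2-smooth test functions. -/
def TestM2 {d : ℕ} (m : (Fin d → ℝ) → ℝ) : Prop :=
  ContDiff ℝ 2 m ∧ (∃ M : ℝ, ∀ y i j, |pd i (pd j m) y| ≤ M) ∧
    Integrable m ∧ Integrable (fun y => supnorm (grad m y))

/-- The class `M³(ℝ^d)` of 3-smooth test functions. -/
def TestM3 {d : ℕ} (m : (Fin d → ℝ) → ℝ) : Prop :=
  ContDiff ℝ 3 m ∧ (∃ M : ℝ, ∀ y i j k, |pd i (pd j (pd k m)) y| ≤ M) ∧
    Integrable m ∧ Integrable (fun y => supnorm (grad m y))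

section helpers

variable {d : ℕ} {u v q : (Fin d → ℝ) → ℝ} {x : Fin d → ℝ} {i j : Fin d}

lemma pd_add (hu : DifferentiableAt ℝ u x) (hv : DifferentiableAt ℝ v x) :
    pd i (fun y => u y + v y) x = pd i u x + pd i v x := by
  simp [pd, fderiv_fun_add hu hv]

lemma pd_mul (hu : DifferentiableAt ℝ u x) (hv : DifferentiableAt ℝ v x) :
    pd i (fun y => u y * v y) x = pd i u x * v x + u x * pd i v x := by
  simp [pd, fderiv_fun_mul hu hv]; ring

lemma pd_neg :
    pd i (fun y => -u y) x = -pd i u x := by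
  simp [pd, fderiv_neg]

lemma pd_const_mul (c : ℝ) (hv : DifferentiableAt ℝ v x) :
    pd i (fun y => c * v y) x = c * pd i v x := by
  simp [pd, fderiv_const_mul hv c]

lemma pd_sum {ι : Type*} (s : Finset ι) (f : ι → (Fin d → ℝ) → ℝ)
    (hf : ∀ j ∈ s, DifferentiableAt ℝ (f j) x) :
    pd i (fun y => ∑ j ∈ s, f j y) x = ∑ j ∈ s, pd i (f j) x := by
  simp [pd, fderiv_fun_sum hf]

lemma pd_log (hq : DifferentiableAt ℝ q x) (h0 : q x ≠ 0) :
    pd i (fun y => Real.log (q y)) x = pd i q x / q x := by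
  have h := (hq.hasFDerivAt.log h0).fderiv
  simp [pd, h, div_eq_inv_mul]

lemma contDiff_pd' {n m : WithTop ℕ∞} {p : (Fin d → ℝ) → ℝ} (h : ContDiff ℝ n p)
    (hm : m + 1 ≤ n) (i : Fin d) : ContDiff ℝ m (pd i p) :=
  (h.fderiv_right hm).clm_apply contDiff_const

lemma pd_comm {p : (Fin d → ℝ) → ℝ} (h : ContDiff ℝ 2 p) (i j : Fin d) (y : Fin d → ℝ) :
    pd i (pd j p) y = pd j (pd i p) y := by
  have hsym : IsSymmSndFDerivAt ℝ p y := (h.contDiffAt).isSymmSndFDerivAt (by norm_num)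
  have hdf : DifferentiableAt ℝ (fderiv ℝ p) y := by
    have : ContDiff ℝ 1 (fderiv ℝ p) := h.fderiv_right (by norm_num)
    exact this.differentiable one_ne_zero y
  have key : ∀ a b : Fin d, pd a (pd b p) y =
      fderiv ℝ (fderiv ℝ p) y (Pi.single a 1) (Pi.single b 1) := by
    intro a b
    have h1 : pd b p = fun z => (fderiv ℝ p z) (Pi.single b 1) := rfl
    rw [pd, h1, fderiv_clm_apply hdf (differentiableAt_const _)]
    simp
  rw [key i j, key j i, hsym]

/-- auxiliary: `|∇f|²` as a function. -/
def Sfun {d : ℕ} (f : (Fin d → ℝ) → ℝ) : (Fin d → ℝ) → ℝ :=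
  fun x => ∑ j, pd j f x * pd j f x

/-- auxiliary: `Δf` as a function. -/
def Ufun {d : ℕ} (f : (Fin d → ℝ) → ℝ) : (Fin d → ℝ) → ℝ :=
  fun x => ∑ j, pd j (pd j f) x

/-- auxiliary: `∂ₖ(Δf + |∇f|²)` as a function. -/
def Wfun {d : ℕ} (f : (Fin d → ℝ) → ℝ) (k : Fin d) : (Fin d → ℝ) → ℝ :=
  fun x => pd k (Ufun f) x + 2 * ∑ j, pd k (pd j f) x * pd j f x

end helpers

/-- Vanishing of the effective second-order error term: for
`f = log q` and `g` solving `q ∇g = ∇²f ∇q + (Δq) ∇f - ∇Δq`, the effective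
second-order Monge–Ampère residual vanishes identically. -/
theorem effective_second_order_error_vanishes
    {d : ℕ} (hd : 0 < d) (q g : (Fin d → ℝ) → ℝ)
    (hqpos : ∀ y, 0 < q y) (hq : ContDiff ℝ 4 q) (hg : ContDiff ℝ 1 g)
    (f : (Fin d → ℝ) → ℝ) (hf : f = fun x => Real.log (q x))
    (heq : ∀ y, q y • grad g y =
      (hess f y).mulVec (grad q y) + lap q y • grad f y - grad (fun x => lap q x) y)
    (y : Fin d → ℝ) :
    lap (fun x => lap q x) y -
        ((∑ i, grad q y i * grad g y i) +
          ∑ i, ∑ j, hess q y i j * (grad f y i * grad f y j)) -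
      2 * (∑ i, grad q y i * grad f y i) * lap f y -
      q y * (lap g y + (lap f y) ^ 2 - ∑ i, ∑ j, hess f y i j * hess f y i j) -
      2 * (lap (fun x => lap q x) y -
        (∑ i, grad (fun x => lap q x) y i * grad f y i) - lap q y * lap f y) = 0 := by
  -- basic facts
  have hq0 : ∀ z, q z ≠ 0 := fun z => ne_of_gt (hqpos z)
  have hf4 : ContDiff ℝ 4 f := by rw [hf]; exact hq.log hq0
  have hf3 : ∀ i, ContDiff ℝ 3 (pd i f) := fun i => contDiff_pd' hf4 (by norm_num) i
  have hf2 : ∀ i j, ContDiff ℝ 2 (pd i (pd j f)) := fun i j =>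
    contDiff_pd' (hf3 j) (by norm_num) i
  have hf1 : ∀ i j k, ContDiff ℝ 1 (pd i (pd j (pd k f))) := fun i j k =>
    contDiff_pd' (hf2 j k) (by norm_num) i
  have dq : ∀ z, DifferentiableAt ℝ q z := fun z =>
    (hq.differentiable (by norm_num)).differentiableAt
  have df : ∀ i z, DifferentiableAt ℝ (pd i f) z := fun i z =>
    ((hf3 i).differentiable (by norm_num)).differentiableAt
  have dff : ∀ i j z, DifferentiableAt ℝ (pd i (pd j f)) z := fun i j z =>
    ((hf2 i j).differentiable (by norm_num)).differentiableAt
  have dfff : ∀ i j k z, DifferentiableAt ℝ (pd i (pd j (pd k f))) z := fun i j k z =>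
    ((hf1 i j k).differentiable one_ne_zero).differentiableAt
  have hU2 : ContDiff ℝ 2 (Ufun f) := ContDiff.sum fun j _ => hf2 j j
  have dU : ∀ z, DifferentiableAt ℝ (Ufun f) z := fun z =>
    (hU2.differentiable (by norm_num)).differentiableAt
  have dpdU : ∀ k z, DifferentiableAt ℝ (pd k (Ufun f)) z := fun k z =>
    ((contDiff_pd' hU2 (by norm_num) k : ContDiff ℝ 1 (pd k (Ufun f))).differentiable
      one_ne_zero).differentiableAt
  have dS : ∀ z, DifferentiableAt ℝ (Sfun f) z := fun z =>
    DifferentiableAt.fun_sum fun j _ => (df j z).mul (df j z)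
  have dW : ∀ k z, DifferentiableAt ℝ (Wfun f k) z := fun k z =>
    (dpdU k z).add ((DifferentiableAt.fun_sum fun j _ => (dff k j z).mul (df j z)).const_mul 2)
  -- first derivative of q in terms of f
  have aq : ∀ (j : Fin d) z, pd j q z = q z * pd j f z := by
    intro j z
    have h1 : pd j f z = pd j q z / q z := by rw [hf]; exact pd_log (dq z) (hq0 z)
    rw [h1, mul_comm, div_mul_cancel₀ _ (hq0 z)]
  have aqF : ∀ j : Fin d, pd j q = fun z => q z * pd j f z := fun j => funext (aq j)
  -- second derivatives of q
  have Aq : ∀ (i j : Fin d) z, pd i (pd j q) z =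
      q z * (pd i f z * pd j f z + pd i (pd j f) z) := by
    intro i j z
    rw [aqF j, pd_mul (dq z) (df j z), aq i]; ring
  -- Laplacian of q
  have lapqE : ∀ z, lap q z = q z * (Sfun f z + Ufun f z) := by
    intro z
    have h1 : ∀ i : Fin d, pd i (pd i q) z =
        q z * (pd i f z * pd i f z) + q z * pd i (pd i f) z := fun i => by rw [Aq]; ring
    calc lap q z = ∑ i, pd i (pd i q) z := rfl
      _ = ∑ i, (q z * (pd i f z * pd i f z) + q z * pd i (pd i f) z) :=
          Finset.sum_congr rfl fun i _ => h1 i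
      _ = q z * (Sfun f z + Ufun f z) := by
          rw [Finset.sum_add_distrib, ← Finset.mul_sum, ← Finset.mul_sum]
          simp only [Sfun, Ufun]; ring
  have lapqF : (fun z => lap q z) = fun z => q z * (Sfun f z + Ufun f z) := funext lapqE
  -- derivative of Sfun
  have pdSf : ∀ (k : Fin d) z, pd k (Sfun f) z = 2 * ∑ j, pd k (pd j f) z * pd j f z := by
    intro k z
    refine Eq.trans (pd_sum (i := k) (x := z) Finset.univ (fun j x => pd j f x * pd j f x)
      (fun j _ => (df j z).mul (df j z))) ?_
    rw [Finset.mul_sum]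
    refine Finset.sum_congr rfl fun j _ => ?_
    rw [pd_mul (df j z) (df j z)]; ring
  -- derivative of Ufun
  have pdUf : ∀ (k : Fin d) z, pd k (Ufun f) z = ∑ j, pd k (pd j (pd j f)) z := by
    intro k z
    exact pd_sum (i := k) (x := z) Finset.univ (fun j x => pd j (pd j f) x)
      (fun j _ => dff j j z)
  -- gradient of the Laplacian of q
  have gradlapqE : ∀ (k : Fin d) z, pd k (fun x => lap q x) z =
      q z * (pd k f z * (Sfun f z + Ufun f z) + Wfun f k z) := by
    intro k z
    rw [lapqF, pd_mul (dq z) ((dS z).fun_add (dU z)), pd_add (dS z) (dU z), pdSf k z, aq k z]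
    simp only [Wfun]; ring
  have gradlapqF : ∀ k : Fin d, pd k (fun x => lap q x) =
      fun z => q z * (pd k f z * (Sfun f z + Ufun f z) + Wfun f k z) :=
    fun k => funext (gradlapqE k)
  -- gradient of g from the equation
  have G : ∀ (i : Fin d) z, pd i g z =
      -((∑ j, pd i (pd j f) z * pd j f z) + pd i (Ufun f) z) := by
    intro i z
    have h := congrFun (heq z) i
    simp only [Pi.smul_apply, smul_eq_mul, Pi.add_apply, Pi.sub_apply, grad, hess,
      Matrix.mulVec, Matrix.of_apply, dotProduct] at h
    rw [lapqE z, gradlapqE i z] at h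
    have h2 : ∑ j, pd i (pd j f) z * pd j q z =
        q z * ∑ j, pd i (pd j f) z * pd j f z := by
      rw [Finset.mul_sum]
      exact Finset.sum_congr rfl fun j _ => by rw [aq j z]; ring
    rw [h2] at h
    have h3 : q z * pd i g z =
        q z * (-((∑ j, pd i (pd j f) z * pd j f z) + pd i (Ufun f) z)) := by
      rw [h]; simp only [Wfun]; ring
    exact mul_left_cancel₀ (hq0 z) h3
  have GF : ∀ i : Fin d, pd i g =
      fun z => -((∑ j, pd i (pd j f) z * pd j f z) + pd i (Ufun f) z) :=
    fun i => funext (G i)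
  -- symmetry of third derivatives
  have pdcomm2 : ∀ i j : Fin d, pd i (pd j f) = pd j (pd i f) := fun i j =>
    funext fun z => pd_comm (hf4.of_le (by norm_num)) i j z
  have S3 : ∀ (i j : Fin d) z, pd i (pd i (pd j f)) z = pd j (pd i (pd i f)) z := by
    intro i j z
    rw [pdcomm2 i j]
    exact pd_comm ((hf3 i).of_le (by norm_num)) i j z
  have S3sum : ∀ (j : Fin d) z, (∑ i, pd i (pd i (pd j f)) z) = pd j (Ufun f) z := by
    intro j z
    rw [pdUf j z]
    exact Finset.sum_congr rfl fun i _ => S3 i j z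
  -- atom-folding helpers at the point y
  have hSfy : (∑ i, pd i f y * pd i f y) = Sfun f y := rfl
  have hUfy : (∑ i, pd i (pd i f) y) = Ufun f y := rfl
  have hTA : (∑ i, ∑ j, pd i (pd i (pd j f)) y * pd j f y) =
      ∑ i, pd i f y * pd i (Ufun f) y := by
    rw [Finset.sum_comm]
    refine Finset.sum_congr rfl fun j _ => ?_
    rw [← Finset.sum_mul, S3sum j y]; ring
  -- aggregate lemma: inner product of grad q and grad g
  have EB : (∑ i, grad q y i * grad g y i) =
      -(q y * ((∑ i, pd i f y * ∑ j, pd i (pd j f) y * pd j f y) +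
        ∑ i, pd i f y * pd i (Ufun f) y)) := by
    have h1 : ∀ i : Fin d, grad q y i * grad g y i =
        (-(q y)) * (pd i f y * ∑ j, pd i (pd j f) y * pd j f y) +
          (-(q y)) * (pd i f y * pd i (Ufun f) y) := by
      intro i; simp only [grad]; rw [aq i y, G i y]; ring
    rw [Finset.sum_congr rfl fun i _ => h1 i]
    simp only [Finset.sum_add_distrib, ← Finset.mul_sum]
    ring
  -- aggregate lemma: hessian of q against grad f ⊗ grad f
  have EC : (∑ i, ∑ j, hess q y i j * (grad f y i * grad f y j)) =
      q y * (Sfun f y * Sfun f y +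
        ∑ i, pd i f y * ∑ j, pd i (pd j f) y * pd j f y) := by
    have h1 : ∀ i : Fin d, (∑ j, hess q y i j * (grad f y i * grad f y j)) =
        (q y * Sfun f y) * (pd i f y * pd i f y) +
          q y * (pd i f y * ∑ j, pd i (pd j f) y * pd j f y) := by
      intro i
      have h2 : ∀ j : Fin d, hess q y i j * (grad f y i * grad f y j) =
          (q y * (pd i f y * pd i f y)) * (pd j f y * pd j f y) +
            (q y * pd i f y) * (pd i (pd j f) y * pd j f y) := by
        intro j; simp only [hess, grad, Matrix.of_apply]; rw [Aq i j y]; ring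
      rw [Finset.sum_congr rfl fun j _ => h2 j]
      simp only [Finset.sum_add_distrib, ← Finset.mul_sum]
      rw [hSfy]; ring
    rw [Finset.sum_congr rfl fun i _ => h1 i]
    simp only [Finset.sum_add_distrib, ← Finset.mul_sum]
    rw [hSfy]; ring
  -- aggregate lemma: inner product of grad q and grad f
  have ED : (∑ i, grad q y i * grad f y i) = q y * Sfun f y := by
    have h1 : ∀ i : Fin d, grad q y i * grad f y i =
        q y * (pd i f y * pd i f y) := by
      intro i; simp only [grad]; rw [aq i y]; ring
    rw [Finset.sum_congr rfl fun i _ => h1 i]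
    simp only [← Finset.mul_sum]
    rw [hSfy]
  -- aggregate lemma: Laplacian of g
  have EE : lap g y = -((∑ i, pd i f y * pd i (Ufun f) y) +
      (∑ i, ∑ j, pd i (pd j f) y * pd i (pd j f) y) +
      ∑ i, pd i (pd i (Ufun f)) y) := by
    have h1 : ∀ i : Fin d, pd i (pd i g) y =
        (-1 : ℝ) * (∑ j, pd i (pd i (pd j f)) y * pd j f y) +
          (-1 : ℝ) * (∑ j, pd i (pd j f) y * pd i (pd j f) y) +
          (-1 : ℝ) * pd i (pd i (Ufun f)) y := by
      intro i
      have dsum : DifferentiableAt ℝ (fun z => ∑ j, pd i (pd j f) z * pd j f z) y :=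
        DifferentiableAt.fun_sum fun j _ => (dff i j y).mul (df j y)
      rw [GF i, pd_neg, pd_add dsum (dpdU i y),
        pd_sum Finset.univ (fun j z => pd i (pd j f) z * pd j f z)
          (fun j _ => (dff i j y).mul (df j y)),
        Finset.sum_congr rfl fun j _ => pd_mul (dff i j y) (df j y),
        Finset.sum_add_distrib]
      ring
    calc lap g y = ∑ i, pd i (pd i g) y := rfl
      _ = _ := by
          rw [Finset.sum_congr rfl fun i _ => h1 i]
          simp only [Finset.sum_add_distrib, ← Finset.mul_sum]
          rw [hTA]; ring
  -- aggregate lemma: inner product of grad (lap q) and grad f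
  have EG : (∑ i, grad (fun x => lap q x) y i * grad f y i) =
      q y * (Sfun f y * (Sfun f y + Ufun f y) +
        (∑ i, pd i f y * pd i (Ufun f) y) +
        2 * ∑ i, pd i f y * ∑ j, pd i (pd j f) y * pd j f y) := by
    have h1 : ∀ i : Fin d, grad (fun x => lap q x) y i * grad f y i =
        (q y * (Sfun f y + Ufun f y)) * (pd i f y * pd i f y) +
          q y * (pd i f y * pd i (Ufun f) y) +
          (2 * q y) * (pd i f y * ∑ j, pd i (pd j f) y * pd j f y) := by
      intro i; simp only [grad]; rw [gradlapqE i y]; simp only [Wfun]; ring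
    rw [Finset.sum_congr rfl fun i _ => h1 i]
    simp only [Finset.sum_add_distrib, ← Finset.mul_sum]
    rw [hSfy]; ring
  -- aggregate lemma: bi-Laplacian of q
  have EA : lap (fun x => lap q x) y =
      q y * ((Sfun f y + Ufun f y) * (Sfun f y + Ufun f y) +
        4 * (∑ i, pd i f y * ∑ j, pd i (pd j f) y * pd j f y) +
        4 * (∑ i, pd i f y * pd i (Ufun f) y) +
        2 * (∑ i, ∑ j, pd i (pd j f) y * pd i (pd j f) y) +
        ∑ i, pd i (pd i (Ufun f)) y) := by
    have stepk : ∀ k : Fin d, pd k (pd k (fun x => lap q x)) y =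
        (q y * (Sfun f y + Ufun f y)) * (pd k f y * pd k f y) +
          (q y * (Sfun f y + Ufun f y)) * pd k (pd k f) y +
          (4 * q y) * (pd k f y * ∑ j, pd k (pd j f) y * pd j f y) +
          (2 * q y) * (pd k f y * pd k (Ufun f) y) +
          q y * pd k (pd k (Ufun f)) y +
          (2 * q y) * (∑ j, pd k (pd k (pd j f)) y * pd j f y) +
          (2 * q y) * (∑ j, pd k (pd j f) y * pd k (pd j f) y) := by
      intro k
      have dsum : DifferentiableAt ℝ (fun z => ∑ j, pd k (pd j f) z * pd j f z) y :=
        DifferentiableAt.fun_sum fun j _ => (dff k j y).mul (df j y)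
      have eW : Wfun f k = fun z => pd k (Ufun f) z + 2 * ∑ j, pd k (pd j f) z * pd j f z :=
        rfl
      have hW : pd k (Wfun f k) y = pd k (pd k (Ufun f)) y +
          2 * ((∑ j, pd k (pd k (pd j f)) y * pd j f y) +
            ∑ j, pd k (pd j f) y * pd k (pd j f) y) := by
        rw [eW, pd_add (dpdU k y) (dsum.const_mul 2), pd_const_mul 2 dsum,
          pd_sum Finset.univ (fun j z => pd k (pd j f) z * pd j f z)
            (fun j _ => (dff k j y).mul (df j y)),
          Finset.sum_congr rfl fun j _ => pd_mul (dff k j y) (df j y),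
          Finset.sum_add_distrib]
      rw [gradlapqF k,
        pd_mul (dq y) (((df k y).fun_mul ((dS y).fun_add (dU y))).fun_add (dW k y)),
        pd_add ((df k y).fun_mul ((dS y).fun_add (dU y))) (dW k y),
        pd_mul (df k y) ((dS y).fun_add (dU y)),
        pd_add (dS y) (dU y),
        pdSf k y, aq k y, hW]
      simp only [Wfun]
      ring
    calc lap (fun x => lap q x) y = ∑ k, pd k (pd k (fun x => lap q x)) y := rfl
      _ = _ := by
          rw [Finset.sum_congr rfl fun k _ => stepk k]
          simp only [Finset.sum_add_distrib, ← Finset.mul_sum]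
          rw [hSfy, hUfy, hTA]; ring
  -- remaining identifications
  have EH : (∑ i, ∑ j, hess f y i j * hess f y i j) =
      ∑ i, ∑ j, pd i (pd j f) y * pd i (pd j f) y := by
    simp only [hess, Matrix.of_apply]
  have EI : lap q y = q y * (Sfun f y + Ufun f y) := lapqE y
  have EU : lap f y = Ufun f y := rfl
  rw [EA, EB, EC, ED, EE, EG, EH, EI, EU]
  ring
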